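/- Let V be a finite vertex set partitioned into a protected set P and a targeted set T, and restrict attention to simple graphs on V of maximum degree at most d. For k ≥ 1, define Flow_k(G, v, S) to be the value of the maximum flow that can be routed between the vertex v and the set S using only paths of length at most k, with unit capacity on every edge. Then Flow_k has targeted sensitivity at most d: for every pair of neighboring graphs G, G' (both of maximum degree at most d) with respect to (P,T), every t ∈ T, and every S ⊆ T, |Flow_k(G,t,S) − Flow_k(G',t,S)| ≤ d. -/

import Mathlib

/-- Two simple graphs on `V` are *neighboring* with respect to a protected set `P`
if one can be obtained from the other by arbitrarily rewiring the edges incident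
to a single protected vertex `v ∈ P`. -/
def Neighboring {V : Type*} (P : Set V) (G G' : SimpleGraph V) : Prop :=
  ∃ v ∈ P, ∀ a b : V, a ≠ v → b ≠ v → (G.Adj a b ↔ G'.Adj a b)

/-- A graph has maximum degree at most `d` if every vertex has at most `d` neighbors. -/
def MaxDegreeLE {V : Type*} (G : SimpleGraph V) (d : ℕ) : Prop :=
  ∀ v : V, Set.ncard {u : V | G.Adj v u} ≤ d

/-- `Flow_k(G, v, S)` is the value of the maximum flow that can be routed between
the vertex `v` and the set `S` using only paths of length at most `k`, with unit
capacity on every edge.  Since all capacities are one, this is the maximum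
cardinality of a collection of pairwise edge-disjoint paths from `v` to vertices
of `S`, each of length at most `k`. -/
noncomputable def FlowK {V : Type*} (G : SimpleGraph V) (k : ℕ) (v : V) (S : Set V) : ℕ :=
  sSup {n : ℕ | ∃ F : Finset ((u : V) × G.Walk v u),
    F.card = n ∧
    (∀ p ∈ F, p.1 ∈ S ∧ p.2.IsPath ∧ 1 ≤ p.2.length ∧ p.2.length ≤ k) ∧
    (∀ p ∈ F, ∀ q ∈ F, p ≠ q → ∀ e ∈ p.2.edges, e ∉ q.2.edges)}

open SimpleGraph

section Aux
variable {V : Type*} [Fintype V]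

def FlowSet (G : SimpleGraph V) (k : ℕ) (v : V) (S : Set V) : Set ℕ :=
  {n : ℕ | ∃ F : Finset ((u : V) × G.Walk v u),
    F.card = n ∧
    (∀ p ∈ F, p.1 ∈ S ∧ p.2.IsPath ∧ 1 ≤ p.2.length ∧ p.2.length ≤ k) ∧
    (∀ p ∈ F, ∀ q ∈ F, p ≠ q → ∀ e ∈ p.2.edges, e ∉ q.2.edges)}

omit [Fintype V] in
lemma edges_ne_nil {G : SimpleGraph V} {t u : V} {w : G.Walk t u} (h : 1 ≤ w.length) :
    w.edges ≠ [] := by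
  intro hnil
  have := w.length_edges
  rw [hnil] at this
  simp at this
  omega

lemma flowSet_bddAbove (G : SimpleGraph V) (k : ℕ) (v : V) (S : Set V) :
    BddAbove (FlowSet G k v S) := by
  classical
  refine ⟨Fintype.card (Option (Sym2 V)), ?_⟩
  rintro n ⟨F, rfl, hmem, hdisj⟩
  have : F.card ≤ (Finset.univ : Finset (Option (Sym2 V))).card := by
    apply Finset.card_le_card_of_injOn (fun p => p.2.edges.head?)
    · intro p _; exact Finset.mem_univ _
    · intro p hp q hq heq
      by_contra hne
      have heq2 : p.2.edges.head? = q.2.edges.head? := heq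
      have hp1 : p.2.edges ≠ [] := edges_ne_nil (hmem p hp).2.2.1
      obtain ⟨e, l, he⟩ := List.exists_cons_of_ne_nil hp1
      rw [he] at heq2
      have hep : e ∈ p.2.edges := by rw [he]; exact List.mem_cons_self
      have heq3 : e ∈ q.2.edges := List.mem_of_mem_head? (by rw [← heq2]; rfl)
      exact hdisj p hp q hq hne e hep heq3
  simpa using this

omit [Fintype V] in
lemma flowSet_zero_mem (G : SimpleGraph V) (k : ℕ) (v : V) (S : Set V) :
    0 ∈ FlowSet G k v S := ⟨∅, by simp, by simp, by simp⟩

lemma flowK_le_aux (d k : ℕ) (G G' : SimpleGraph V) (v : V)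
    (hdG : Set.ncard {u : V | G.Adj v u} ≤ d)
    (hadj : ∀ a b : V, a ≠ v → b ≠ v → (G.Adj a b ↔ G'.Adj a b))
    (t : V) (S : Set V) :
    sSup (FlowSet G k t S) ≤ sSup (FlowSet G' k t S) + d := by
  classical
  apply csSup_le ⟨0, flowSet_zero_mem G k t S⟩
  rintro n ⟨F, rfl, hmem, hdisj⟩
  set Fbad := F.filter (fun p => ∃ e ∈ p.2.edges, v ∈ e) with hFbad
  set Fgood := F.filter (fun p => ¬ ∃ e ∈ p.2.edges, v ∈ e) with hFgood
  have hsplit : F.card = Fbad.card + Fgood.card :=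
    (Finset.card_filter_add_card_filter_not _).symm
  have hNfin : ({u : V | G.Adj v u}).Finite := Set.toFinite _
  -- bad count ≤ d
  have hchoice : ∀ p : {x // x ∈ Fbad}, ∃ e, e ∈ p.1.2.edges ∧ v ∈ e := by
    intro p
    simpa using (Finset.mem_filter.mp p.2).2
  choose ep hep hvp using hchoice
  have hbad : Fbad.card ≤ d := by
    have hmap : Fbad.attach.card ≤ hNfin.toFinset.card := by
      apply Finset.card_le_card_of_injOn (fun p => Sym2.Mem.other (hvp p))
      · intro p _
        rw [Finset.mem_coe, Set.Finite.mem_toFinset]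
        have hedge : ep p ∈ G.edgeSet := (Walk.edges_subset_edgeSet _) (hep p)
        have := Sym2.other_spec (hvp p)
        rw [← this] at hedge
        exact hedge
      · intro p _ q _ heq
        by_contra hne
        have heq2 : Sym2.Mem.other (hvp p) = Sym2.Mem.other (hvp q) := heq
        have h1 := Sym2.other_spec (hvp p)
        have h2 := Sym2.other_spec (hvp q)
        have hee : ep p = ep q := by rw [← h1, ← h2, heq2]
        have hne' : p.1 ≠ q.1 := fun h => hne (Subtype.ext h)
        exact hdisj p.1 (Finset.mem_filter.mp p.2).1 q.1 (Finset.mem_filter.mp q.2).1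
          hne' (ep p) (hep p) (hee ▸ hep q)
    rw [Finset.card_attach] at hmap
    calc Fbad.card ≤ hNfin.toFinset.card := hmap
      _ = Set.ncard {u : V | G.Adj v u} := (Set.ncard_eq_toFinset_card _ hNfin).symm
      _ ≤ d := hdG
  -- good paths transfer to G'
  have hgoodedges : ∀ p : {x // x ∈ Fgood}, ∀ e ∈ p.1.2.edges, e ∈ G'.edgeSet := by
    intro p e he
    have hnov : ¬ ∃ e ∈ p.1.2.edges, v ∈ e := by simpa using (Finset.mem_filter.mp p.2).2
    have hvE : v ∉ e := fun hv => hnov ⟨e, he, hv⟩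
    have heG : e ∈ G.edgeSet := (Walk.edges_subset_edgeSet _) he
    induction e with
    | h a b =>
      have ha : a ≠ v := fun h => hvE (h ▸ Sym2.mem_mk_left a b)
      have hb : b ≠ v := fun h => hvE (h ▸ Sym2.mem_mk_right a b)
      exact (hadj a b ha hb).mp heG
  set f : {x // x ∈ Fgood} → ((u : V) × G'.Walk t u) :=
    fun p => ⟨p.1.1, p.1.2.transfer G' (hgoodedges p)⟩ with hf
  have hfinj : Function.Injective f := by
    intro p q heq
    rcases p with ⟨⟨u, w⟩, hp⟩
    rcases q with ⟨⟨u', w'⟩, hq⟩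
    simp only [hf, Sigma.mk.inj_iff] at heq
    obtain ⟨h1, h2⟩ := heq
    subst h1
    simp only [heq_eq_eq] at h2
    have hww : w = w' := by
      have hA' : ∀ e ∈ (w.transfer G' (hgoodedges ⟨⟨u, w⟩, hp⟩)).edges, e ∈ G.edgeSet := by
        rw [Walk.edges_transfer]; exact w.edges_subset_edgeSet
      have hB' : ∀ e ∈ (w'.transfer G' (hgoodedges ⟨⟨u, w'⟩, hq⟩)).edges, e ∈ G.edgeSet := by
        rw [Walk.edges_transfer]; exact w'.edges_subset_edgeSet
      have h4 := congrArg
        (fun z : {z : G'.Walk t u // ∀ e ∈ z.edges, e ∈ G.edgeSet} => z.1.transfer G z.2)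
        (Subtype.ext h2 :
          (⟨w.transfer G' (hgoodedges ⟨⟨u, w⟩, hp⟩), hA'⟩ :
            {z : G'.Walk t u // ∀ e ∈ z.edges, e ∈ G.edgeSet}) =
          ⟨w'.transfer G' (hgoodedges ⟨⟨u, w'⟩, hq⟩), hB'⟩)
      simpa [Walk.transfer_transfer, Walk.transfer_self] using h4
    subst hww
    rfl
  have hgood : Fgood.card ≤ sSup (FlowSet G' k t S) := by
    apply le_csSup (flowSet_bddAbove G' k t S)
    refine ⟨Fgood.attach.image f, ?_, ?_, ?_⟩
    · rw [Finset.card_image_of_injective _ hfinj, Finset.card_attach]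
    · intro q hq
      simp only [Finset.mem_image] at hq
      obtain ⟨p, _, rfl⟩ := hq
      have hpF : p.1 ∈ F := (Finset.mem_filter.mp p.2).1
      obtain ⟨h1, h2, h3, h4⟩ := hmem p.1 hpF
      exact ⟨h1, h2.transfer _, by rw [hf]; simpa [Walk.length_transfer],
        by rw [hf]; simpa [Walk.length_transfer]⟩
    · intro q1 hq1 q2 hq2 hne e he
      simp only [Finset.mem_image] at hq1 hq2
      obtain ⟨p1, _, rfl⟩ := hq1
      obtain ⟨p2, _, rfl⟩ := hq2
      change e ∈ (p1.1.2.transfer G' (hgoodedges p1)).edges at he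
      change e ∉ (p2.1.2.transfer G' (hgoodedges p2)).edges
      rw [Walk.edges_transfer] at he ⊢
      have hne' : p1.1 ≠ p2.1 := by
        intro h; exact hne (congrArg f (Subtype.ext h))
      exact hdisj p1.1 (Finset.mem_filter.mp p1.2).1 p2.1 (Finset.mem_filter.mp p2.2).1
        hne' e he
  omega
end Aux


lemma flowK_eq_sSup {V : Type*} [Fintype V] (G : SimpleGraph V) (k : ℕ) (v : V) (S : Set V) :
    FlowK G k v S = sSup (FlowSet G k v S) := rfl

/-- On graphs of maximum degree at most `d`, the statistic `Flow_k` has targeted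
sensitivity at most `d`. -/
theorem flowK_targeted_sensitivity {V : Type*} [Fintype V]
    (P T : Set V) (hUnion : P ∪ T = Set.univ) (hDisj : Disjoint P T)
    (d k : ℕ) (hk : 1 ≤ k)
    (G G' : SimpleGraph V) (hdG : MaxDegreeLE G d) (hdG' : MaxDegreeLE G' d)
    (hN : Neighboring P G G')
    (t : V) (ht : t ∈ T) (S : Set V) (hS : S ⊆ T) :
    |(FlowK G k t S : ℤ) - (FlowK G' k t S : ℤ)| ≤ (d : ℤ) := by
  obtain ⟨v, hvP, hadj⟩ := hN
  have h1 : FlowK G k t S ≤ FlowK G' k t S + d := by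
    rw [flowK_eq_sSup, flowK_eq_sSup]
    exact flowK_le_aux d k G G' v (hdG v) hadj t S
  have h2 : FlowK G' k t S ≤ FlowK G k t S + d := by
    rw [flowK_eq_sSup, flowK_eq_sSup]
    exact flowK_le_aux d k G' G v (hdG' v) (fun a b ha hb => (hadj a b ha hb).symm) t S
  rw [abs_sub_le_iff]
  constructor <;> push_cast <;> omega
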